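/- Let A : 𝔥 → 𝔨 and B : 𝔥^⊥ → 𝔨 be block entries of a unitary U = [[A,B],[C,D]], so that AA* + BB* = I_𝔨 and B*B + D*D = I_{𝔥^⊥}. Then for any polynomial Φ with complex coefficients, A* B Φ(D*D) B* A = Φ(A*A)(I − A*A) A*A as operators on 𝔥. -/

import Mathlib

open ContinuousLinearMap Polynomial in
private lemma aeval_intertwine' {E F : Type*} [NormedAddCommGroup E] [NormedSpace ℂ E]
    [NormedAddCommGroup F] [NormedSpace ℂ F]
    (X : E →L[ℂ] E) (Y : F →L[ℂ] F) (S : F →L[ℂ] E) (h : X ∘L S = S ∘L Y) (Φ : ℂ[X]) :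
    Polynomial.aeval X Φ ∘L S = S ∘L Polynomial.aeval Y Φ := by
  have hpow : ∀ n : ℕ, (X ^ n) ∘L S = S ∘L (Y ^ n) := by
    intro n
    induction n with
    | zero => simp [one_def]
    | succ n ih =>
      calc (X ^ (n+1)) ∘L S = (X ^ n) ∘L (X ∘L S) := by
            rw [pow_succ, mul_def, ContinuousLinearMap.comp_assoc]
        _ = ((X ^ n) ∘L S) ∘L Y := by rw [h, ContinuousLinearMap.comp_assoc]
        _ = S ∘L (Y ^ (n+1)) := by
            rw [ih, pow_succ, mul_def, ContinuousLinearMap.comp_assoc]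
  induction Φ using Polynomial.induction_on' with
  | add p q hp hq =>
    simp only [map_add, ContinuousLinearMap.add_comp, ContinuousLinearMap.comp_add, hp, hq]
  | monomial n a =>
    simp only [Polynomial.aeval_monomial, Algebra.algebraMap_eq_smul_one, smul_mul_assoc,
      one_mul, ContinuousLinearMap.smul_comp, ContinuousLinearMap.comp_smul, hpow n]

set_option maxHeartbeats 2000000 in
open ContinuousLinearMap Complex Submodule Polynomial in
theorem stmt4
    {H : Type*} [NormedAddCommGroup H] [InnerProductSpace ℂ H] [CompleteSpace H]
    (𝔥 𝔨 : Submodule ℂ H) [CompleteSpace 𝔥] [CompleteSpace 𝔨]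
    (U : H →L[ℂ] H) (hU1 : adjoint U ∘L U = 1) (hU2 : U ∘L adjoint U = 1)
    (A : 𝔥 →L[ℂ] 𝔨) (B : 𝔥ᗮ →L[ℂ] 𝔨) (C : 𝔥 →L[ℂ] 𝔨ᗮ) (D : 𝔥ᗮ →L[ℂ] 𝔨ᗮ)
    (hA : ∀ x : 𝔥, A x = orthogonalProjection 𝔨 (U x))
    (hB : ∀ y : 𝔥ᗮ, B y = orthogonalProjection 𝔨 (U y))
    (hC : ∀ x : 𝔥, C x = orthogonalProjection 𝔨ᗮ (U x))
    (hD : ∀ y : 𝔥ᗮ, D y = orthogonalProjection 𝔨ᗮ (U y))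
    (Φ : Polynomial ℂ) :
    (adjoint A ∘L B) ∘L (Polynomial.aeval (adjoint D ∘L D) Φ ∘L (adjoint B ∘L A)) =
      Polynomial.aeval (adjoint A ∘L A) Φ ∘L ((1 - adjoint A ∘L A) ∘L (adjoint A ∘L A)) := by
  have hU1' : ∀ z : H, adjoint U (U z) = z := fun z => by
    have := ContinuousLinearMap.ext_iff.1 hU1 z; simpa using this
  have hU2' : ∀ z : H, U (adjoint U z) = z := fun z => by
    have := ContinuousLinearMap.ext_iff.1 hU2 z; simpa using this
  -- structural forms of A, B, D
  have hAc : A = orthogonalProjection 𝔨 ∘L (U ∘L 𝔥.subtypeL) := by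
    ext x; exact congrArg Subtype.val (hA x)
  have hBc : B = orthogonalProjection 𝔨 ∘L (U ∘L (𝔥ᗮ).subtypeL) := by
    ext y; exact congrArg Subtype.val (hB y)
  have hDc : D = orthogonalProjection 𝔨ᗮ ∘L (U ∘L (𝔥ᗮ).subtypeL) := by
    ext y; exact congrArg Subtype.val (hD y)
  -- adjoint formulas
  have hA' : ∀ k : 𝔨, adjoint A k = orthogonalProjection 𝔥 (adjoint U k) := by
    intro k
    rw [hAc]
    simp [adjoint_comp, Submodule.adjoint_subtypeL, Submodule.adjoint_orthogonalProjection]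
  have hB' : ∀ k : 𝔨, adjoint B k = orthogonalProjection 𝔥ᗮ (adjoint U k) := by
    intro k
    rw [hBc]
    simp [adjoint_comp, Submodule.adjoint_subtypeL, Submodule.adjoint_orthogonalProjection]
  have hD' : ∀ k : 𝔨ᗮ, adjoint D k = orthogonalProjection 𝔥ᗮ (adjoint U k) := by
    intro k
    rw [hDc]
    simp [adjoint_comp, Submodule.adjoint_subtypeL, Submodule.adjoint_orthogonalProjection]
  -- block relations
  have h1 : A ∘L adjoint A + B ∘L adjoint B = 1 := by
    ext k
    have hsplit : (orthogonalProjection 𝔥 (adjoint U k) : H) + (orthogonalProjection 𝔥ᗮ (adjoint U k) : H) = adjoint U k :=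
      𝔥.starProjection_add_starProjection_orthogonal (adjoint U k)
    calc ((((A ∘L adjoint A + B ∘L adjoint B)) k : 𝔨) : H)
        = (orthogonalProjection 𝔨 (U ((orthogonalProjection 𝔥 (adjoint U k) : H)
            + (orthogonalProjection 𝔥ᗮ (adjoint U k) : H))) : H) := by
          simp [hA, hB, hA', hB', map_add]
      _ = ((k : H) : H) := by rw [hsplit, hU2']; simp
      _ = ((1 : 𝔨 →L[ℂ] 𝔨) k : H) := by simp
  have h2 : adjoint B ∘L B + adjoint D ∘L D = 1 := by
    ext y
    have hsplit : (orthogonalProjection 𝔨 (U y) : H) + (orthogonalProjection 𝔨ᗮ (U y) : H) = U y :=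
      𝔨.starProjection_add_starProjection_orthogonal (U y)
    calc ((((adjoint B ∘L B + adjoint D ∘L D)) y : 𝔥ᗮ) : H)
        = (orthogonalProjection 𝔥ᗮ (adjoint U ((orthogonalProjection 𝔨 (U y) : H)
            + (orthogonalProjection 𝔨ᗮ (U y) : H))) : H) := by
          simp [hB, hD, hB', hD', map_add]
      _ = ((y : H) : H) := by rw [hsplit, hU1']; simp
      _ = ((1 : 𝔥ᗮ →L[ℂ] 𝔥ᗮ) y : H) := by simp
  have hBB : B ∘L adjoint B = 1 - A ∘L adjoint A := eq_sub_of_add_eq' h1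
  have hDD : adjoint D ∘L D = 1 - adjoint B ∘L B := eq_sub_of_add_eq' h2
  have hiD : (adjoint D ∘L D) ∘L adjoint B = adjoint B ∘L (A ∘L adjoint A) := by
    simp only [hDD, hBB, ContinuousLinearMap.sub_comp, ContinuousLinearMap.comp_sub,
      ContinuousLinearMap.one_def, ContinuousLinearMap.id_comp, ContinuousLinearMap.comp_id,
      ContinuousLinearMap.comp_assoc, sub_sub_cancel]
  have step1 := aeval_intertwine' _ _ _ hiD Φ
  have hiA : (A ∘L adjoint A) ∘L A = A ∘L (adjoint A ∘L A) :=
    ContinuousLinearMap.comp_assoc _ _ _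
  have step2 := aeval_intertwine' _ _ _ hiA Φ
  set T := adjoint A ∘L A with hT
  have hcomm : T ∘L ((T - T ∘L T)) = (T - T ∘L T) ∘L T := by
    simp only [ContinuousLinearMap.sub_comp, ContinuousLinearMap.comp_sub,
      ContinuousLinearMap.comp_assoc]
  have step3 := aeval_intertwine' T T (T - T ∘L T) hcomm Φ
  calc (adjoint A ∘L B) ∘L (Polynomial.aeval (adjoint D ∘L D) Φ ∘L (adjoint B ∘L A))
      = (adjoint A ∘L B) ∘L ((Polynomial.aeval (adjoint D ∘L D) Φ ∘L adjoint B) ∘L A) := by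
        simp only [ContinuousLinearMap.comp_assoc]
    _ = (adjoint A ∘L B) ∘L ((adjoint B ∘L Polynomial.aeval (A ∘L adjoint A) Φ) ∘L A) := by
        rw [step1]
    _ = (adjoint A ∘L B) ∘L (adjoint B ∘L (Polynomial.aeval (A ∘L adjoint A) Φ ∘L A)) := by
        simp only [ContinuousLinearMap.comp_assoc]
    _ = (adjoint A ∘L B) ∘L (adjoint B ∘L (A ∘L Polynomial.aeval T Φ)) := by rw [step2]
    _ = ((adjoint A ∘L (B ∘L adjoint B)) ∘L A) ∘L Polynomial.aeval T Φ := by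
        simp only [ContinuousLinearMap.comp_assoc]
    _ = ((adjoint A ∘L (1 - A ∘L adjoint A)) ∘L A) ∘L Polynomial.aeval T Φ := by rw [hBB]
    _ = (T - T ∘L T) ∘L Polynomial.aeval T Φ := by
        simp only [hT, ContinuousLinearMap.comp_sub, ContinuousLinearMap.sub_comp,
          ContinuousLinearMap.one_def, ContinuousLinearMap.comp_id, ContinuousLinearMap.id_comp,
          ContinuousLinearMap.comp_assoc]
    _ = Polynomial.aeval T Φ ∘L (T - T ∘L T) := step3.symm
    _ = Polynomial.aeval T Φ ∘L ((1 - T) ∘L T) := by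
        simp only [ContinuousLinearMap.sub_comp, ContinuousLinearMap.one_def,
          ContinuousLinearMap.id_comp]
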